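/- For all positive integers k, t, s, r and n satisfying max(t+1, s) ≤ k ≤ n and r ≥ 2, one has M(n,r,k,t,s) ≥ r^(−s/(k−t)) · C(n,s), where C(n,s) is the binomial coefficient. -/

import Mathlib

open Finset

/-- The `s`-shadow of a hypergraph `H`: all `s`-element vertex sets contained in
some edge of `H`. -/
def hShadow {V : Type*} [DecidableEq V] (s : ℕ) (H : Finset (Finset V)) :
    Finset (Finset V) :=
  H.biUnion fun e => e.powersetCard s

/-- One step of `t`-tight connectivity: both `a` and `b` are edges of `H` and they
share at least `t` vertices. -/
def TightStep {V : Type*} [DecidableEq V] (t : ℕ) (H : Finset (Finset V))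
    (a b : Finset V) : Prop :=
  a ∈ H ∧ b ∈ H ∧ t ≤ (a ∩ b).card

/-- Two edges lie in the same `t`-tight component iff they are joined by a chain of
edges, consecutive ones sharing at least `t` vertices. -/
def TightConn {V : Type*} [DecidableEq V] (t : ℕ) (H : Finset (Finset V)) :
    Finset V → Finset V → Prop :=
  Relation.ReflTransGen (TightStep t H)

open scoped Classical in
/-- The `t`-tight component of the edge `e` in the hypergraph `H`. -/
noncomputable def tightComponent {V : Type*} [DecidableEq V] (t : ℕ)
    (H : Finset (Finset V)) (e : Finset V) : Finset (Finset V) :=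
  H.filter fun f => TightConn t H e f

/-- The `k`-uniform hypergraph `H i` of edges of `K^k_n` having color `i` under the
coloring `c`. -/
def colorClass (n r k : ℕ) (c : Finset (Fin n) → Fin r) (i : Fin r) :
    Finset (Finset (Fin n)) :=
  (Finset.univ.powersetCard k).filter fun e => c e = i

/-- `M(n,r,k,t,s;c)`: the largest number of vertex `s`-sets contained in the edges of
a monochromatic `t`-tight component of the `r`-coloring `c` of `K^k_n`. -/
noncomputable def Mcol (n r k t s : ℕ) (c : Finset (Fin n) → Fin r) : ℕ :=
  Finset.univ.sup fun i : Fin r =>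
    (colorClass n r k c i).sup fun e =>
      (hShadow s (tightComponent t (colorClass n r k c i) e)).card

/-- `M(n,r,k,t,s)`: the minimum of `M(n,r,k,t,s;c)` over all `r`-colorings `c` of
`K^k_n`. -/
noncomputable def Mmin (n r k t s : ℕ) : ℕ :=
  sInf {m | ∃ c : Finset (Fin n) → Fin r, Mcol n r k t s c = m}

/-! ### Real-parameter binomial coefficients -/

noncomputable def rchoose (x : ℝ) (m : ℕ) : ℝ :=
  (∏ j ∈ Finset.range m, (x - j)) / m.factorial

lemma rchoose_zero (x : ℝ) : rchoose x 0 = 1 := by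
  simp [rchoose]

lemma rchoose_nonneg {x : ℝ} {m : ℕ} (hx : (m : ℝ) - 1 ≤ x) : 0 ≤ rchoose x m := by
  apply div_nonneg _ (by positivity)
  apply Finset.prod_nonneg
  intro j hj
  rw [Finset.mem_range] at hj
  have : (j : ℝ) ≤ (m : ℝ) - 1 := by
    have : (j : ℝ) + 1 ≤ (m : ℝ) := by exact_mod_cast hj
    linarith
  linarith

lemma rchoose_pos {x : ℝ} {m : ℕ} (hx : (m : ℝ) - 1 < x) : 0 < rchoose x m := by
  apply div_pos _ (by positivity)
  apply Finset.prod_pos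
  intro j hj
  rw [Finset.mem_range] at hj
  have : (j : ℝ) ≤ (m : ℝ) - 1 := by
    have : (j : ℝ) + 1 ≤ (m : ℝ) := by exact_mod_cast hj
    linarith
  linarith

lemma rchoose_mono {x y : ℝ} {m : ℕ} (hx : (m : ℝ) - 1 ≤ x) (hxy : x ≤ y) :
    rchoose x m ≤ rchoose y m := by
  apply div_le_div_of_nonneg_right _ (by positivity)
  · apply Finset.prod_le_prod
    · intro j hj
      rw [Finset.mem_range] at hj
      have : (j : ℝ) ≤ (m : ℝ) - 1 := by
        have : (j : ℝ) + 1 ≤ (m : ℝ) := by exact_mod_cast hj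
        linarith
      linarith
    · intro j _
      linarith

lemma rchoose_succ (x : ℝ) (m : ℕ) :
    rchoose x (m + 1) = rchoose x m * (x - m) / (m + 1) := by
  rw [rchoose, rchoose, Finset.prod_range_succ, Nat.factorial_succ]
  have h1 : (m.factorial : ℝ) ≠ 0 := by positivity
  have h2 : ((m : ℝ) + 1) ≠ 0 := by positivity
  push_cast
  rw [div_mul_eq_mul_div, div_div, eq_div_iff (by positivity), div_mul_eq_mul_div,
    div_eq_iff (by positivity)]
  ring

lemma rchoose_natCast {n m : ℕ} (h : m ≤ n) : rchoose (n : ℝ) m = n.choose m := by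
  induction m with
  | zero => simp [rchoose_zero]
  | succ m ih =>
    have hm : m ≤ n := le_of_lt (Nat.lt_of_succ_le h)
    rw [rchoose_succ, ih hm]
    have key : n.choose (m + 1) * (m + 1) = n.choose m * (n - m) := Nat.choose_succ_right_eq n m
    have hcast : ((n - m : ℕ) : ℝ) = (n : ℝ) - m := by
      rw [Nat.cast_sub hm]
    have key' : (n.choose (m + 1) : ℝ) * (m + 1) = (n.choose m : ℝ) * ((n : ℝ) - m) := by
      rw [← hcast]
      exact_mod_cast congrArg (Nat.cast : ℕ → ℝ) key
    have hm1 : ((m : ℝ) + 1) ≠ 0 := by positivity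
    field_simp
    linarith [key']

lemma rchoose_pascal {m : ℕ} (hm : 1 ≤ m) (x : ℝ) :
    rchoose x m = rchoose (x - 1) m + rchoose (x - 1) (m - 1) := by
  obtain ⟨m', rfl⟩ : ∃ m', m = m' + 1 := ⟨m - 1, by omega⟩
  have h1 : ∏ j ∈ Finset.range (m' + 1), (x - j) = x * ∏ j ∈ Finset.range m', (x - 1 - j) := by
    rw [Finset.prod_range_succ']
    simp only [Nat.cast_zero, sub_zero]
    rw [mul_comm]
    congr 1
    apply Finset.prod_congr rfl
    intro j _
    push_cast
    ring
  have h2 : ∏ j ∈ Finset.range (m' + 1), (x - 1 - j)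
      = (∏ j ∈ Finset.range m', (x - 1 - j)) * (x - 1 - m') := by
    rw [Finset.prod_range_succ]
  simp only [Nat.add_sub_cancel]
  rw [rchoose, rchoose, rchoose, h1, h2, Nat.factorial_succ]
  have hfac : (m'.factorial : ℝ) ≠ 0 := by positivity
  have hfac1 : (((m' + 1) : ℕ) : ℝ) ≠ 0 := by positivity
  field_simp
  push_cast
  ring

lemma rchoose_continuous (m : ℕ) : Continuous fun x : ℝ => rchoose x m := by
  unfold rchoose
  apply Continuous.div_const
  exact continuous_finset_prod _ fun j _ => by continuity

/-! ### Shifted families and the Lovász form of Kruskal–Katona -/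

def ShiftedFam (G : Finset (Finset ℕ)) : Prop :=
  ∀ e ∈ G, ∀ j ∈ e, ∀ i < j, i ∉ e → insert i (e.erase j) ∈ G

def famMeasure (F : Finset (Finset ℕ)) : ℕ := ∑ A ∈ F, ∑ a ∈ A, a

section KK

open scoped FinsetFamily

lemma compress_singleton {i j : ℕ} (hij : i ≠ j) {e : Finset ℕ} (hi : i ∉ e) (hj : j ∈ e) :
    UV.compress {i} {j} e = insert i (e.erase j) := by
  rw [UV.compress, if_pos]
  · rw [sup_eq_union, union_comm, ← insert_eq, sdiff_singleton_eq_erase]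
    ext a
    simp only [mem_erase, mem_insert]
    constructor
    · rintro ⟨haj, rfl | hae⟩
      · exact Or.inl rfl
      · exact Or.inr ⟨haj, hae⟩
    · rintro (rfl | ⟨haj, hae⟩)
      · exact ⟨hij, Or.inl rfl⟩
      · exact ⟨haj, Or.inr hae⟩
  · exact ⟨by simpa using hi, by simpa using hj⟩

lemma famMeasure_compression_lt {i j : ℕ} (hij : i < j) (F : Finset (Finset ℕ))
    (hne : UV.compression {i} {j} F ≠ F) :
    famMeasure (UV.compression {i} {j} F) < famMeasure F := by
  classical
  set cp := UV.compress ({i} : Finset ℕ) {j} with hcp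
  have hkeep : UV.compression {i} {j} F
      = {a ∈ F | cp a ∈ F} ∪ ({a ∈ F | cp a ∉ F}).image cp := by
    rw [UV.compression, filter_image]
  have hne2 : ({a ∈ F | cp a ∉ F}).Nonempty := by
    rw [nonempty_iff_ne_empty]
    intro hempty
    apply hne
    rw [hkeep, hempty, image_empty, union_empty]
    have : {a ∈ F | cp a ∈ F} ∪ {a ∈ F | cp a ∉ F} = F := filter_union_filter_not_eq _ _
    rw [hempty, union_empty] at this
    exact this
  have hsum : famMeasure (UV.compression {i} {j} F)
      = (∑ A ∈ {a ∈ F | cp a ∈ F}, ∑ a ∈ A, a) + ∑ A ∈ {a ∈ F | cp a ∉ F}, ∑ a ∈ cp A, a := by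
    rw [famMeasure, hkeep, sum_union, sum_image]
    · exact fun a ha b hb hab => UV.compress_injOn (by simpa using ha) (by simpa using hb) hab
    · rw [disjoint_left]
      intro a ha hb
      rw [mem_filter] at ha
      obtain ⟨b, hb1, rfl⟩ := mem_image.1 hb
      rw [mem_filter] at hb1
      exact hb1.2 ha.1
  have hsumF : famMeasure F
      = (∑ A ∈ {a ∈ F | cp a ∈ F}, ∑ a ∈ A, a) + ∑ A ∈ {a ∈ F | cp a ∉ F}, ∑ a ∈ A, a := by
    rw [famMeasure, ← sum_union (disjoint_filter_filter_not F F _), filter_union_filter_not_eq]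
  rw [hsum, hsumF]
  apply (add_lt_add_iff_left _).2
  apply sum_lt_sum_of_nonempty hne2
  intro A hA
  rw [mem_filter] at hA
  -- cp A ≠ A since cp A ∉ F, A ∈ F; so the if-condition holds
  have hcond : i ∉ A ∧ j ∈ A := by
    by_contra hcon
    have : cp A = A := by
      rw [hcp, UV.compress, if_neg]
      intro ⟨h1, h2⟩
      exact hcon ⟨by simpa using h1, by simpa using h2⟩
    rw [this] at hA
    exact hA.2 hA.1
  have hA' : cp A = insert i (A.erase j) := compress_singleton hij.ne hcond.1 hcond.2
  rw [hA']
  rw [sum_insert (fun hmem => hcond.1 (mem_of_mem_erase hmem))]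
  have h2 := Finset.add_sum_erase A (fun a => a) hcond.2
  omega

lemma exists_shifted (m : ℕ) (F : Finset (Finset ℕ)) (hF : ∀ e ∈ F, e.card = m) :
    ∃ G : Finset (Finset ℕ), G.card = F.card ∧ (∂ G).card ≤ (∂ F).card ∧
      (∀ e ∈ G, e.card = m) ∧ ShiftedFam G := by
  classical
  by_cases h : ShiftedFam F
  · exact ⟨F, rfl, le_rfl, hF, h⟩
  · rw [ShiftedFam] at h
    push_neg at h
    obtain ⟨e, he, j, hj, i, hij, hi, hins⟩ := h
    have hcomp : UV.compress {i} {j} e = insert i (e.erase j) :=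
      compress_singleton hij.ne hi hj
    set F₁ := UV.compression {i} {j} F with hF₁
    have hne : F₁ ≠ F := by
      intro heq
      apply hins
      have := UV.compress_mem_compression (u := ({i} : Finset ℕ)) (v := {j}) he
      rw [hcomp, ← hF₁, heq] at this
      exact this
    have hmeas : famMeasure F₁ < famMeasure F := famMeasure_compression_lt hij F hne
    have hsized : ∀ e' ∈ F₁, e'.card = m := by
      have := Set.Sized.uvCompression (u := ({i} : Finset ℕ)) (v := {j})
        (𝒜 := F) (r := m) (by simp) (fun e' he' => hF e' he')
      exact fun e' he' => this he'
    obtain ⟨G, hG1, hG2, hG3, hG4⟩ := exists_shifted m F₁ hsized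
    refine ⟨G, ?_, ?_, hG3, hG4⟩
    · rw [hG1, hF₁, UV.card_compression]
    · refine hG2.trans ?_
      apply UV.card_shadow_compression_le
      intro x hx
      simp only [mem_singleton] at hx
      subst hx
      exact ⟨j, mem_singleton_self j, by simp [UV.isCompressed_self]⟩
termination_by famMeasure F
decreasing_by exact hmeas

theorem kk_step (m : ℕ) (F : Finset (Finset ℕ)) (hm : 1 ≤ m) (x : ℝ)
    (hx : (m : ℝ) ≤ x) (hF : ∀ e ∈ F, e.card = m) (hc : rchoose x m ≤ (F.card : ℝ)) :
    rchoose x (m - 1) ≤ (((∂ F).card : ℕ) : ℝ) := by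
  classical
  obtain ⟨G, hGcard, hGsh, hGs, hshift⟩ := exists_shifted m F hF
  rw [← hGcard] at hc
  have hGF : (((∂ G).card : ℕ) : ℝ) ≤ (((∂ F).card : ℕ) : ℝ) := by exact_mod_cast hGsh
  refine le_trans ?_ hGF
  have hm1x : (m : ℝ) - 1 < x := by linarith
  have hGne : G.Nonempty := by
    rw [← card_pos]
    have : (0 : ℝ) < (G.card : ℝ) := lt_of_lt_of_le (rchoose_pos hm1x) hc
    exact_mod_cast this
  rcases eq_or_lt_of_le hm with h1 | h2
  · -- base case m = 1
    obtain rfl : m = 1 := h1.symm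
    obtain ⟨e, he⟩ := hGne
    have hene : e.Nonempty := by
      rw [← card_pos, hGs e he]; omega
    obtain ⟨a, ha⟩ := hene
    have hemp : (∅ : Finset ℕ) ∈ ∂ G := by
      have h0 : e.erase a ∈ ∂ G := erase_mem_shadow he ha
      have : e.erase a = ∅ := by
        rw [← card_eq_zero, card_erase_of_mem ha, hGs e he]
      rwa [this] at h0
    have : 1 ≤ (∂ G).card := card_pos.2 ⟨∅, hemp⟩
    have : (1 : ℝ) ≤ ((∂ G).card : ℝ) := by exact_mod_cast this
    simpa [rchoose_zero] using this
  -- main case m ≥ 2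
  set S := G.filter (fun e => (0 : ℕ) ∈ e) with hS
  set M := G.filter (fun e => (0 : ℕ) ∉ e) with hM
  set L := S.image (fun e => e.erase 0) with hL
  have hSM : S.card + M.card = G.card := by
    rw [hS, hM]
    exact card_filter_add_card_filter_not (fun e => (0 : ℕ) ∈ e)
  have hLS : L.card = S.card := by
    rw [hL]
    apply card_image_of_injOn
    intro a ha b hb hab
    have h0a : (0 : ℕ) ∈ a := (mem_filter.1 ha).2
    have h0b : (0 : ℕ) ∈ b := (mem_filter.1 hb).2
    simp only at hab
    rw [← insert_erase h0a, ← insert_erase h0b, hab]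
  have hSne : S.Nonempty := by
    obtain ⟨e, he⟩ := hGne
    by_cases h0 : (0 : ℕ) ∈ e
    · exact ⟨e, mem_filter.2 ⟨he, h0⟩⟩
    · have hene : e.Nonempty := by rw [← card_pos, hGs e he]; omega
      obtain ⟨j, hj⟩ := hene
      have hj0 : 0 < j := Nat.pos_of_ne_zero fun h => h0 (h ▸ hj)
      have hmem := hshift e he j hj 0 hj0 h0
      exact ⟨_, mem_filter.2 ⟨hmem, mem_insert_self _ _⟩⟩
  have hsubL : ∂ M ⊆ L := by
    intro D hD
    rw [mem_shadow_iff] at hD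
    obtain ⟨e, heM, a, hae, hDe⟩ := hD
    rw [hM, mem_filter] at heM
    have ha0 : 0 < a := Nat.pos_of_ne_zero fun h => heM.2 (h ▸ hae)
    have hmem := hshift e heM.1 a hae 0 ha0 heM.2
    rw [hL, mem_image]
    refine ⟨insert 0 (e.erase a), mem_filter.2 ⟨hmem, mem_insert_self _ _⟩, ?_⟩
    rw [erase_insert (fun hc => heM.2 (mem_of_mem_erase hc)), hDe]
  -- the key claim
  have hKEY : rchoose (x - 1) (m - 1) ≤ (L.card : ℝ) := by
    by_contra hK
    push_neg at hK
    have hMcard : rchoose (x - 1) m < (M.card : ℝ) := by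
      have e1 : (S.card : ℝ) + (M.card : ℝ) = (G.card : ℝ) := by exact_mod_cast hSM
      have e2 : (L.card : ℝ) = (S.card : ℝ) := by exact_mod_cast hLS
      have e3 := rchoose_pascal hm x
      linarith
    rcases le_or_gt (m : ℝ) (x - 1) with hx1 | hx1
    · have hMsized : ∀ e ∈ M, e.card = m := fun e he => hGs e (mem_filter.1 he).1
      have hMlt : M.card < F.card := by
        rw [← hGcard]
        have : 0 < S.card := card_pos.2 hSne
        omega
      have hrec := kk_step m M hm (x - 1) hx1 hMsized (le_of_lt hMcard)
      have hle : (((∂ M).card : ℕ) : ℝ) ≤ (L.card : ℝ) := by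
        exact_mod_cast card_le_card hsubL
      linarith
    · have hMne : M.Nonempty := by
        rw [← card_pos]
        have h0 : (0 : ℝ) ≤ rchoose (x - 1) m := rchoose_nonneg (by linarith)
        have : (0 : ℝ) < (M.card : ℝ) := lt_of_le_of_lt h0 hMcard
        exact_mod_cast this
      obtain ⟨e, heM⟩ := hMne
      have hecard : e.card = m := hGs e (mem_filter.1 heM).1
      have himsub : e.image (fun a => e.erase a) ⊆ L := by
        intro D hD
        obtain ⟨a, ha, rfl⟩ := mem_image.1 hD
        exact hsubL (erase_mem_shadow heM ha)
      have himinj : m ≤ L.card := by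
        have h1 : (e.image fun a => e.erase a).card = m := by
          rw [card_image_of_injOn, hecard]
          intro a ha b hb hab
          simp only at hab
          by_contra hne
          have : b ∈ e.erase a := mem_erase.2 ⟨fun h => hne h.symm, hb⟩
          rw [hab] at this
          exact (notMem_erase b e) this
        calc m = (e.image fun a => e.erase a).card := h1.symm
          _ ≤ L.card := card_le_card himsub
      have hch : rchoose (x - 1) (m - 1) ≤ (m : ℝ) := by
        have hcast : ((m - 1 : ℕ) : ℝ) = (m : ℝ) - 1 := by
          rw [Nat.cast_sub hm]; simp
        have h1 : rchoose (x - 1) (m - 1) ≤ rchoose ((m : ℕ) : ℝ) (m - 1) := by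
          apply rchoose_mono _ (by linarith)
          rw [hcast]; linarith
        have h2 : rchoose ((m : ℕ) : ℝ) (m - 1) = (m.choose (m - 1) : ℝ) :=
          rchoose_natCast (Nat.sub_le m 1)
        have h3 : m.choose (m - 1) = m := by
          have hsym := Nat.choose_symm (n := m) (k := 1) hm
          rwa [Nat.choose_one_right] at hsym
        rw [h2, h3] at h1
        exact h1
      have : (m : ℝ) ≤ (L.card : ℝ) := by exact_mod_cast himinj
      linarith
  -- main argument
  have hm2 : 1 ≤ m - 1 := by omega
  have hLsized : ∀ D ∈ L, D.card = m - 1 := by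
    intro D hD
    obtain ⟨e, he, rfl⟩ := mem_image.1 hD
    rw [card_erase_of_mem (mem_filter.1 he).2, hGs e (mem_filter.1 he).1]
  have hcast : ((m - 1 : ℕ) : ℝ) = (m : ℝ) - 1 := by
    rw [Nat.cast_sub hm]; simp
  have hrecL := kk_step (m - 1) L hm2 (x - 1) (by rw [hcast]; linarith) hLsized hKEY
  have hunion : L ∪ (∂ L).image (insert 0) ⊆ ∂ G := by
    apply union_subset
    · intro D hD
      obtain ⟨e, he, rfl⟩ := mem_image.1 hD
      exact erase_mem_shadow (mem_filter.1 he).1 (mem_filter.1 he).2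
    · intro D hD
      obtain ⟨D', hD', rfl⟩ := mem_image.1 hD
      rw [mem_shadow_iff] at hD'
      obtain ⟨Q, hQ, a, haQ, rfl⟩ := hD'
      obtain ⟨e, heS, rfl⟩ := mem_image.1 hQ
      have h0e : (0 : ℕ) ∈ e := (mem_filter.1 heS).2
      have heG : e ∈ G := (mem_filter.1 heS).1
      have ha0 : a ≠ 0 := fun h => (notMem_erase (0:ℕ) e) (h ▸ haQ)
      have key : insert 0 ((e.erase 0).erase a) = e.erase a := by
        rw [Finset.erase_right_comm]
        exact insert_erase (mem_erase.2 ⟨fun h => ha0 h.symm, h0e⟩)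
      rw [key]
      exact erase_mem_shadow heG (mem_of_mem_erase haQ)
  have hdisj : Disjoint L ((∂ L).image (insert 0)) := by
    rw [disjoint_left]
    intro D hDL hDim
    obtain ⟨e, _, rfl⟩ := mem_image.1 hDL
    obtain ⟨D', _, hins⟩ := mem_image.1 hDim
    exact (notMem_erase (0:ℕ) e) (hins ▸ mem_insert_self 0 D')
  have h0L : ∀ D ∈ ∂ L, (0 : ℕ) ∉ D := by
    intro D hD h0D
    rw [mem_shadow_iff] at hD
    obtain ⟨Q, hQ, a, _, rfl⟩ := hD
    obtain ⟨e, _, rfl⟩ := mem_image.1 hQ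
    exact (notMem_erase (0:ℕ) e) (mem_of_mem_erase h0D)
  have hcardim : ((∂ L).image (insert 0)).card = (∂ L).card := by
    apply card_image_of_injOn
    intro D hD D' hD' hDD'
    have : (insert 0 D).erase 0 = (insert 0 D').erase 0 := by rw [hDD']
    rwa [erase_insert (h0L D hD), erase_insert (h0L D' hD')] at this
  have hfin : L.card + (∂ L).card ≤ (∂ G).card := by
    calc L.card + (∂ L).card = (L ∪ (∂ L).image (insert 0)).card := by
          rw [card_union_of_disjoint hdisj, hcardim]
      _ ≤ (∂ G).card := card_le_card hunion
  have hfinR : (L.card : ℝ) + ((∂ L).card : ℝ) ≤ ((∂ G).card : ℝ) := by exact_mod_cast hfin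
  have hpas2 : rchoose x (m - 1) = rchoose (x - 1) (m - 1) + rchoose (x - 1) (m - 1 - 1) :=
    rchoose_pascal hm2 x
  linarith [hrecL, hKEY]
termination_by (m, F.card)
decreasing_by
  · exact Prod.Lex.right m hMlt
  · exact Prod.Lex.left _ _ (by omega)

theorem kk_iter (m : ℕ) (F : Finset (Finset ℕ)) (x : ℝ) (hx : (m : ℝ) ≤ x)
    (hF : ∀ e ∈ F, e.card = m) (hc : rchoose x m ≤ (F.card : ℝ)) :
    ∀ i, i ≤ m → rchoose x (m - i) ≤ (((∂^[i] F).card : ℕ) : ℝ) := by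
  intro i
  induction i with
  | zero => intro _; simpa using hc
  | succ i ih =>
    intro hi
    have hi' : i ≤ m := by omega
    have hprev := ih hi'
    have hsized : ∀ e ∈ (∂^[i] F), e.card = m - i := by
      have : (↑(∂^[i] F) : Set (Finset ℕ)).Sized (m - i) := by
        apply Set.Sized.shadow_iterate
        exact fun e he => hF e he
      exact fun e he => this he
    have hstep := kk_step (m - i) (∂^[i] F) (by omega) x
      (by
        have : ((m - i : ℕ) : ℝ) ≤ (m : ℝ) := by exact_mod_cast Nat.sub_le m i
        linarith) hsized hprev
    rw [Function.iterate_succ_apply']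
    have : m - i - 1 = m - (i + 1) := by omega
    rwa [this] at hstep

lemma hShadow_eq_iter {α : Type*} [DecidableEq α] {m j : ℕ} (hj : j ≤ m)
    (G : Finset (Finset α)) (hG : ∀ e ∈ G, e.card = m) :
    hShadow j G = ∂^[m - j] G := by
  ext T
  rw [mem_shadow_iterate_iff_exists_sdiff]
  simp only [hShadow, mem_biUnion, mem_powersetCard]
  constructor
  · rintro ⟨e, he, hTe, hT⟩
    refine ⟨e, he, hTe, ?_⟩
    rw [card_sdiff_of_subset hTe, hG e he, hT]
  · rintro ⟨e, he, hTe, hT⟩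
    refine ⟨e, he, hTe, ?_⟩
    have h1 : T.card ≤ e.card := card_le_card hTe
    have h2 := card_sdiff_of_subset hTe
    rw [hG e he] at *
    omega

lemma hShadow_image_card {n : ℕ} (j : ℕ) (F : Finset (Finset (Fin n))) :
    (hShadow j (F.image fun e => e.image (Fin.val))).card = (hShadow j F).card := by
  classical
  have hinj : Function.Injective (fun (e : Finset (Fin n)) => e.image Fin.val) :=
    fun a b hab => by
      have := Finset.image_injective (f := (Fin.val : Fin n → ℕ)) Fin.val_injective
      exact this hab
  have him : hShadow j (F.image fun e => e.image Fin.val)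
      = (hShadow j F).image fun S => S.image Fin.val := by
    ext T
    simp only [hShadow, mem_biUnion, mem_powersetCard, mem_image]
    constructor
    · rintro ⟨e', ⟨e, he, rfl⟩, hTe, hT⟩
      set u := e.filter (fun a : Fin n => (a : ℕ) ∈ T) with hu
      have huT : u.image Fin.val = T := by
        apply Finset.Subset.antisymm
        · intro b hb
          obtain ⟨a, ha, rfl⟩ := mem_image.1 hb
          exact (mem_filter.1 ha).2
        · intro b hb
          obtain ⟨a, ha, rfl⟩ := mem_image.1 (hTe hb)
          exact mem_image.2 ⟨a, mem_filter.2 ⟨ha, hb⟩, rfl⟩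
      refine ⟨u, ⟨e, he, filter_subset _ _, ?_⟩, huT⟩
      rw [← huT] at hT
      rwa [card_image_of_injective _ Fin.val_injective] at hT
    · rintro ⟨S, ⟨e, he, hSe, hS⟩, rfl⟩
      refine ⟨e.image Fin.val, ⟨e, he, rfl⟩, image_subset_image hSe, ?_⟩
      rw [card_image_of_injective _ Fin.val_injective, hS]
  rw [him, card_image_of_injective _ hinj]

theorem kk_main {n k j : ℕ} (hj : j ≤ k) (F : Finset (Finset (Fin n)))
    (hF : ∀ e ∈ F, e.card = k) (x : ℝ) (hx : (k : ℝ) ≤ x) (hc : rchoose x k ≤ (F.card : ℝ)) :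
    rchoose x j ≤ ((hShadow j F).card : ℝ) := by
  classical
  set F' : Finset (Finset ℕ) := F.image (fun e => e.image Fin.val) with hF'
  have hinj : Function.Injective (fun (e : Finset (Fin n)) => e.image Fin.val) :=
    fun a b hab => Finset.image_injective Fin.val_injective hab
  have hcard : F'.card = F.card := card_image_of_injective _ hinj
  have hsized : ∀ e ∈ F', e.card = k := by
    rintro e' he'
    obtain ⟨e, he, rfl⟩ := mem_image.1 he'
    rw [card_image_of_injective _ Fin.val_injective]
    exact hF e he
  have hiter := kk_iter k F' x hx hsized (by rw [hcard]; exact hc) (k - j) (Nat.sub_le k j)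
  have hkj : k - (k - j) = j := by omega
  rw [hkj] at hiter
  rw [← hShadow_image_card j F, hShadow_eq_iter hj F' hsized]
  exact hiter

end KK

/-! ### Components bookkeeping -/

section Comp

variable {V : Type*} [DecidableEq V] {t : ℕ} {H : Finset (Finset V)}

lemma mem_self_tightComponent {e : Finset V} (he : e ∈ H) : e ∈ tightComponent t H e := by
  classical
  rw [tightComponent, mem_filter]
  exact ⟨he, Relation.ReflTransGen.refl⟩

lemma tightComponent_subset (e : Finset V) : tightComponent t H e ⊆ H := by
  classical
  rw [tightComponent]
  exact filter_subset _ _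

lemma tightConn_symm : Symmetric (TightConn t H) := by
  have := @Relation.ReflTransGen.symmetric _ (TightStep t H) ⟨by
    intro a b ⟨h1, h2, h3⟩
    exact ⟨h2, h1, by rwa [inter_comm]⟩⟩
  exact fun a b h => this.symm a b h

lemma tightComponent_eq_of_mem {e f : Finset V} (hf : f ∈ tightComponent t H e) :
    tightComponent t H f = tightComponent t H e := by
  classical
  rw [tightComponent, mem_filter] at hf
  ext g
  rw [tightComponent, tightComponent, mem_filter, mem_filter]
  constructor
  · rintro ⟨hg, hconn⟩
    exact ⟨hg, hf.2.trans hconn⟩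
  · rintro ⟨hg, hconn⟩
    exact ⟨hg, (tightConn_symm hf.2).trans hconn⟩

lemma mem_tightComponent_iff {e f : Finset V} (he : e ∈ H) (hf : f ∈ H) :
    f ∈ tightComponent t H e ↔ tightComponent t H f = tightComponent t H e := by
  constructor
  · exact tightComponent_eq_of_mem
  · intro h
    rw [← h]
    exact mem_self_tightComponent hf

lemma sum_card_components :
    ∑ C ∈ H.image (tightComponent t H), C.card = H.card := by
  classical
  rw [card_eq_sum_card_fiberwise (f := tightComponent t H)
    (t := H.image (tightComponent t H)) (fun e he => mem_image_of_mem _ he)]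
  apply sum_congr rfl
  intro C hC
  obtain ⟨e, he, rfl⟩ := mem_image.1 hC
  congr 1
  ext f
  constructor
  · intro hf
    exact mem_filter.2 ⟨tightComponent_subset e hf, tightComponent_eq_of_mem hf⟩
  · intro hf
    rw [mem_filter] at hf
    rw [← hf.2]
    exact mem_self_tightComponent hf.1

lemma tightComponent_tshadow_disjoint {e f : Finset V} (he : e ∈ H) (hf : f ∈ H)
    (hne : tightComponent t H e ≠ tightComponent t H f) :
    Disjoint (hShadow t (tightComponent t H e)) (hShadow t (tightComponent t H f)) := by
  classical
  rw [disjoint_left]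
  intro T hTe hTf
  simp only [hShadow, mem_biUnion, mem_powersetCard] at hTe hTf
  obtain ⟨a, ha, hTa, hTcard⟩ := hTe
  obtain ⟨b, hb, hTb, _⟩ := hTf
  have haH : a ∈ H := tightComponent_subset e ha
  have hbH : b ∈ H := tightComponent_subset f hb
  have hstep : TightStep t H a b := by
    refine ⟨haH, hbH, ?_⟩
    have : T ⊆ a ∩ b := subset_inter hTa hTb
    calc t = T.card := hTcard.symm
      _ ≤ (a ∩ b).card := card_le_card this
  apply hne
  have h1 : tightComponent t H a = tightComponent t H e := tightComponent_eq_of_mem ha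
  have h2 : tightComponent t H b = tightComponent t H f := tightComponent_eq_of_mem hb
  have h3 : b ∈ tightComponent t H a := by
    rw [tightComponent, mem_filter]
    exact ⟨hbH, Relation.ReflTransGen.single hstep⟩
  rw [← h1, ← h2]
  exact (tightComponent_eq_of_mem h3).symm

lemma sum_card_tshadow_le [Fintype V] :
    ∑ C ∈ H.image (tightComponent t H), (hShadow t C).card
      ≤ (Fintype.card V).choose t := by
  classical
  have hdisj : ∀ C₁ ∈ H.image (tightComponent t H), ∀ C₂ ∈ H.image (tightComponent t H),
      C₁ ≠ C₂ → Disjoint (hShadow t C₁) (hShadow t C₂) := by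
    intro C₁ h₁ C₂ h₂ hne
    obtain ⟨e, he, rfl⟩ := mem_image.1 h₁
    obtain ⟨f, hf, rfl⟩ := mem_image.1 h₂
    exact tightComponent_tshadow_disjoint he hf hne
  rw [← card_biUnion hdisj]
  have hsub : (H.image (tightComponent t H)).biUnion (hShadow t)
      ⊆ (univ : Finset V).powersetCard t := by
    intro T hT
    rw [mem_biUnion] at hT
    obtain ⟨C, _, hTC⟩ := hT
    simp only [hShadow, mem_biUnion, mem_powersetCard] at hTC
    obtain ⟨e, _, _, hTcard⟩ := hTC
    rw [mem_powersetCard]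
    exact ⟨subset_univ _, hTcard⟩
  calc ((H.image (tightComponent t H)).biUnion (hShadow t)).card
      ≤ ((univ : Finset V).powersetCard t).card := card_le_card hsub
    _ = (Fintype.card V).choose t := by rw [card_powersetCard, card_univ]

end Comp


/-! ### The product inequality -/

lemma lemA {n k t s r : ℕ} (ht : t < k) (hsk : s ≤ k) (hkn : k ≤ n) (hr : 1 ≤ r)
    {x : ℝ} (hxk : (k : ℝ) ≤ x) (hxn : x ≤ (n : ℝ))
    (H : (∏ j ∈ Finset.Ico t k, ((n : ℝ) - j)) ≤ r * ∏ j ∈ Finset.Ico t k, (x - j)) :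
    (r : ℝ) ^ (-(s : ℝ) / ((k : ℝ) - (t : ℝ))) * ∏ j ∈ Finset.range s, ((n : ℝ) - j)
      ≤ ∏ j ∈ Finset.range s, (x - j) := by
  have hq1 : 1 ≤ k - t := by omega
  set q : ℕ := k - t with hqdef
  have hqc : (k : ℝ) - (t : ℝ) = (q : ℝ) := by
    rw [hqdef, Nat.cast_sub ht.le]
  have hrpos : (0 : ℝ) < r := by exact_mod_cast hr
  have hr1 : (1 : ℝ) ≤ r := by exact_mod_cast hr
  set g : ℝ := (r : ℝ) ^ (-(1 : ℝ) / (q : ℝ)) with hgdef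
  have hqR : (0 : ℝ) < (q : ℝ) := by exact_mod_cast hq1
  have hgpos : 0 < g := Real.rpow_pos_of_pos hrpos _
  have hgq : g ^ q = 1 / r := by
    rw [hgdef, ← Real.rpow_natCast ((r : ℝ) ^ (-(1 : ℝ) / (q : ℝ))) q,
      ← Real.rpow_mul hrpos.le]
    have : -(1 : ℝ) / (q : ℝ) * (q : ℕ) = -1 := by
      field_simp
    rw [this]
    rw [Real.rpow_neg_one, one_div]
  -- basic facts about f
  set f : ℕ → ℝ := fun j => (x - j) / ((n : ℝ) - j) with hfdef
  have hxj : ∀ j : ℕ, j < k → 0 < x - j := by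
    intro j hj
    have : (j : ℝ) + 1 ≤ (k : ℝ) := by exact_mod_cast hj
    linarith
  have hnj : ∀ j : ℕ, j < k → 0 < (n : ℝ) - j := by
    intro j hj
    have h1 : (j : ℝ) + 1 ≤ (k : ℝ) := by exact_mod_cast hj
    have h2 : (k : ℝ) ≤ (n : ℝ) := by exact_mod_cast hkn
    linarith
  have hfpos : ∀ j : ℕ, j < k → 0 < f j := fun j hj => div_pos (hxj j hj) (hnj j hj)
  have hfanti : ∀ j j' : ℕ, j ≤ j' → j' < k → f j' ≤ f j := by
    intro j j' hjj hj'
    have hjk : j < k := lt_of_le_of_lt hjj hj'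
    rw [hfdef]
    rw [div_le_div_iff₀ (hnj j' hj') (hnj j hjk)]
    have hcast : (j : ℝ) ≤ (j' : ℝ) := by exact_mod_cast hjj
    nlinarith [hxn]
  have hprod_n_pos : ∀ a b : ℕ, b ≤ k → (0:ℝ) < ∏ j ∈ Finset.Ico a b, ((n : ℝ) - j) := by
    intro a b hb
    apply Finset.prod_pos
    intro j hj
    exact hnj j (lt_of_lt_of_le (Finset.mem_Ico.1 hj).2 hb)
  have hIcof : ∀ a b : ℕ, b ≤ k →
      ∏ j ∈ Finset.Ico a b, f j
        = (∏ j ∈ Finset.Ico a b, (x - j)) / ∏ j ∈ Finset.Ico a b, ((n : ℝ) - j) := by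
    intro a b hb
    rw [hfdef, Finset.prod_div_distrib]
  -- the hypothesis in terms of f
  have hPge : g ^ q ≤ ∏ j ∈ Finset.Ico t k, f j := by
    rw [hgq, hIcof t k le_rfl, le_div_iff₀ (hprod_n_pos t k le_rfl), one_div, inv_mul_eq_div,
      div_le_iff₀ hrpos]
    linarith [H]
  have hft : g ≤ f t := by
    have h1 : ∏ j ∈ Finset.Ico t k, f j ≤ (f t) ^ q := by
      have : ∏ j ∈ Finset.Ico t k, f j ≤ ∏ j ∈ Finset.Ico t k, f t := by
        apply Finset.prod_le_prod
        · intro j hj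
          exact (hfpos j (Finset.mem_Ico.1 hj).2).le
        · intro j hj
          exact hfanti t j (Finset.mem_Ico.1 hj).1 (Finset.mem_Ico.1 hj).2
      rwa [Finset.prod_const, Nat.card_Ico] at this
    exact le_of_pow_le_pow_left₀ (by omega) (hfpos t ht).le (hPge.trans h1)
  -- main claim: g ^ s ≤ ∏_{j < s} f j
  have hmain : g ^ s ≤ ∏ j ∈ Finset.range s, f j := by
    rcases le_or_gt s t with hst | hts
    · calc g ^ s = ∏ _j ∈ Finset.range s, g := by rw [Finset.prod_const, Finset.card_range]
        _ ≤ ∏ j ∈ Finset.range s, f j := by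
          apply Finset.prod_le_prod (fun _ _ => hgpos.le)
          intro j hj
          have hjt : j ≤ t := le_trans (Finset.mem_range.1 hj).le (by omega)
          exact hft.trans (hfanti j t hjt ht)
    · have hsplit : ∏ j ∈ Finset.range s, f j
          = (∏ j ∈ Finset.range t, f j) * ∏ j ∈ Finset.Ico t s, f j :=
        (Finset.prod_range_mul_prod_Ico f hts.le).symm
      have part1 : g ^ t ≤ ∏ j ∈ Finset.range t, f j := by
        calc g ^ t = ∏ _j ∈ Finset.range t, g := by rw [Finset.prod_const, Finset.card_range]
          _ ≤ _ := by
            apply Finset.prod_le_prod (fun _ _ => hgpos.le)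
            intro j hj
            exact hft.trans (hfanti j t (Finset.mem_range.1 hj).le ht)
      set p : ℕ := s - t with hpdef
      have hp1 : 1 ≤ p := by omega
      have part2 : g ^ p ≤ ∏ j ∈ Finset.Ico t s, f j := by
        set pre := ∏ j ∈ Finset.Ico t s, f j with hpre
        set suf := ∏ j ∈ Finset.Ico s k, f j with hsuf
        have hpresuf : pre * suf = ∏ j ∈ Finset.Ico t k, f j :=
          Finset.prod_Ico_consecutive f hts.le hsk
        have hprepos : 0 < pre := by
          apply Finset.prod_pos
          intro j hj
          exact hfpos j (lt_of_lt_of_le (Finset.mem_Ico.1 hj).2 hsk)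
        rcases eq_or_lt_of_le hsk with hsek | hslt
        · have hempty : Finset.Ico s k = ∅ := by rw [hsek, Finset.Ico_self]
          have : suf = 1 := by rw [hsuf, hempty, Finset.prod_empty]
          have hpq : p = q := by omega
          rw [hpq]
          calc g ^ q ≤ ∏ j ∈ Finset.Ico t k, f j := hPge
            _ = pre * suf := hpresuf.symm
            _ = pre := by rw [this, mul_one]
        · have hs1k : s - 1 < k := by omega
          have hs1t : t ≤ s - 1 := by omega
          set y := f (s - 1) with hy
          have hypos : 0 < y := hfpos _ hs1k
          have hsufpos : 0 < suf := by
            apply Finset.prod_pos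
            intro j hj
            exact hfpos j (Finset.mem_Ico.1 hj).2
          have hyp_pre : y ^ p ≤ pre := by
            have : ∏ _j ∈ Finset.Ico t s, y ≤ pre := by
              apply Finset.prod_le_prod (fun _ _ => hypos.le)
              intro j hj
              have : j ≤ s - 1 := by
                have := (Finset.mem_Ico.1 hj).2; omega
              exact hfanti j (s-1) this hs1k
            rwa [Finset.prod_const, Nat.card_Ico] at this
          have hsuf_y : suf ≤ y ^ (k - s) := by
            have : suf ≤ ∏ _j ∈ Finset.Ico s k, y := by
              apply Finset.prod_le_prod
              · intro j hj
                exact (hfpos j (Finset.mem_Ico.1 hj).2).le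
              · intro j hj
                have : s - 1 ≤ j := by
                  have := (Finset.mem_Ico.1 hj).1; omega
                exact hfanti (s-1) j this (Finset.mem_Ico.1 hj).2
            rwa [Finset.prod_const, Nat.card_Ico] at this
          have key : (g ^ p) ^ q ≤ pre ^ q := by
            have hqpk : p + (k - s) = q := by omega
            calc (g ^ p) ^ q = (g ^ q) ^ p := by rw [← pow_mul, ← pow_mul, Nat.mul_comm]
              _ ≤ (pre * suf) ^ p := by
                  apply pow_le_pow_left₀ (by positivity) 
                  calc g ^ q ≤ ∏ j ∈ Finset.Ico t k, f j := hPge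
                    _ = pre * suf := hpresuf.symm
              _ = pre ^ p * suf ^ p := by rw [mul_pow]
              _ ≤ pre ^ p * (y ^ (k - s)) ^ p := by
                  apply mul_le_mul_of_nonneg_left _ (by positivity)
                  exact pow_le_pow_left₀ hsufpos.le hsuf_y p
              _ = pre ^ p * (y ^ p) ^ (k - s) := by rw [← pow_mul, ← pow_mul, Nat.mul_comm]
              _ ≤ pre ^ p * pre ^ (k - s) := by
                  apply mul_le_mul_of_nonneg_left _ (by positivity)
                  exact pow_le_pow_left₀ (by positivity) hyp_pre (k - s)
              _ = pre ^ q := by rw [← pow_add, hqpk]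
          exact le_of_pow_le_pow_left₀ (by omega) hprepos.le key
      calc g ^ s = g ^ t * g ^ p := by rw [← pow_add]; congr 1; omega
        _ ≤ _ := by
          rw [hsplit]
          exact mul_le_mul part1 part2 (by positivity) (Finset.prod_nonneg
            (fun j hj => (hfpos j (lt_of_lt_of_le (Finset.mem_range.1 hj) (by omega))).le))
  -- conclusion
  have hgs : (r : ℝ) ^ (-(s : ℝ) / ((k : ℝ) - (t : ℝ))) = g ^ s := by
    rw [hqc, hgdef, ← Real.rpow_natCast ((r : ℝ) ^ (-(1:ℝ)/(q:ℝ))) s, ← Real.rpow_mul hrpos.le]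
    congr 1
    field_simp
  have hsplit2 : ∏ j ∈ Finset.range s, (x - j)
      = (∏ j ∈ Finset.range s, f j) * ∏ j ∈ Finset.range s, ((n:ℝ) - j) := by
    rw [hfdef, ← Finset.prod_mul_distrib]
    apply Finset.prod_congr rfl
    intro j hj
    have hjk : j < k := lt_of_lt_of_le (Finset.mem_range.1 hj) hsk
    rw [div_mul_cancel₀ _ (hnj j hjk).ne']
  rw [hgs, hsplit2]
  apply mul_le_mul_of_nonneg_right hmain
  apply Finset.prod_nonneg
  intro j hj
  exact (hnj j (lt_of_lt_of_le (Finset.mem_range.1 hj) hsk)).le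


/-- **Theorem (Lower bound).** -/
theorem statement0 (k t s r n : ℕ) (hk : 0 < k) (ht : 0 < t) (hs : 0 < s)
    (hr : 2 ≤ r) (hn : 0 < n) (hmax : max (t + 1) s ≤ k) (hkn : k ≤ n) :
    (r : ℝ) ^ (-(s : ℝ) / ((k : ℝ) - (t : ℝ))) * (n.choose s : ℝ) ≤
      (Mmin n r k t s : ℝ) := by
  classical
  have hsk : s ≤ k := le_trans (le_max_right _ _) hmax
  have htk : t < k := lt_of_lt_of_le (Nat.lt_succ_self t) (le_trans (le_max_left _ _) hmax)
  -- Mmin is attained by some coloring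
  have hne : {m | ∃ c : Finset (Fin n) → Fin r, Mcol n r k t s c = m}.Nonempty :=
    ⟨Mcol n r k t s (fun _ => ⟨0, by omega⟩), ⟨_, rfl⟩⟩
  have hmem : Mmin n r k t s ∈ {m | ∃ c : Finset (Fin n) → Fin r, Mcol n r k t s c = m} :=
    Nat.sInf_mem hne
  obtain ⟨c, hc⟩ := hmem
  rw [← hc]
  -- sums over color classes
  have sum1 : ∑ i : Fin r, (colorClass n r k c i).card = n.choose k := by
    have h := card_eq_sum_card_fiberwise (f := c) (s := Finset.univ.powersetCard k)
      (t := Finset.univ) (fun e _ => mem_univ _)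
    rw [card_powersetCard, card_univ, Fintype.card_fin] at h
    simp only [colorClass]
    exact h.symm
  -- the sigma finset of all components
  set 𝒮 : Finset ((_ : Fin r) × Finset (Finset (Fin n))) :=
    Finset.univ.sigma (fun i => (colorClass n r k c i).image
      (tightComponent t (colorClass n r k c i))) with h𝒮
  have hsum1 : ∑ p ∈ 𝒮, p.2.card = n.choose k := by
    rw [h𝒮, Finset.sum_sigma]
    rw [← sum1]
    exact Finset.sum_congr rfl fun i _ => sum_card_components
  have hsum2 : ∑ p ∈ 𝒮, (hShadow t p.2).card ≤ r * n.choose t := by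
    rw [h𝒮, Finset.sum_sigma]
    calc ∑ i : Fin r, ∑ C ∈ (colorClass n r k c i).image
          (tightComponent t (colorClass n r k c i)), (hShadow t C).card
        ≤ ∑ _i : Fin r, n.choose t := by
          apply Finset.sum_le_sum
          intro i _
          have := sum_card_tshadow_le (t := t) (H := colorClass n r k c i)
          rwa [Fintype.card_fin] at this
      _ = r * n.choose t := by rw [Finset.sum_const, card_univ, Fintype.card_fin, smul_eq_mul]
  have hCk_pos : 0 < n.choose k := Nat.choose_pos hkn
  have h𝒮ne : 𝒮.Nonempty := by
    by_contra hcon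
    rw [not_nonempty_iff_eq_empty] at hcon
    rw [hcon, Finset.sum_empty] at hsum1
    omega
  -- find a good component
  have hgood : ∃ p ∈ 𝒮, n.choose k * (hShadow t p.2).card ≤ r * n.choose t * p.2.card := by
    by_contra hcon
    push_neg at hcon
    have hlt := Finset.sum_lt_sum_of_nonempty h𝒮ne hcon
    have hA : ∑ p ∈ 𝒮, r * n.choose t * p.2.card = r * n.choose t * n.choose k := by
      rw [← Finset.mul_sum, hsum1]
    have hB : ∑ p ∈ 𝒮, n.choose k * (hShadow t p.2).card
        = n.choose k * ∑ p ∈ 𝒮, (hShadow t p.2).card := by rw [Finset.mul_sum]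
    rw [hA, hB] at hlt
    have hle := Nat.mul_le_mul_left (n.choose k) hsum2
    have : n.choose k * (r * n.choose t) = r * n.choose t * n.choose k := by ring
    omega
  obtain ⟨⟨i, C⟩, hpS, hineq⟩ := hgood
  rw [h𝒮, Finset.mem_sigma] at hpS
  dsimp only at hpS hineq
  obtain ⟨e₀, he₀, hCdef⟩ := Finset.mem_image.1 hpS.2
  -- basic facts about C
  have hCsub : C ⊆ Finset.univ.powersetCard k := by
    rw [← hCdef]
    exact (tightComponent_subset e₀).trans (filter_subset _ _)
  have hCuniform : ∀ e ∈ C, e.card = k := by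
    intro e he
    exact (mem_powersetCard.1 (hCsub he)).2
  have hC1 : 1 ≤ C.card := by
    rw [← hCdef]
    exact card_pos.2 ⟨e₀, mem_self_tightComponent he₀⟩
  have hCle : C.card ≤ n.choose k := by
    calc C.card ≤ (Finset.univ.powersetCard k : Finset (Finset (Fin n))).card :=
          card_le_card hCsub
      _ = n.choose k := by rw [card_powersetCard, card_univ, Fintype.card_fin]
  -- find real x with rchoose x k = C.card
  have hknR : (k : ℝ) ≤ (n : ℝ) := by exact_mod_cast hkn
  have hIVT := intermediate_value_Icc hknR (rchoose_continuous k).continuousOn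
  have hmemI : (C.card : ℝ) ∈ Set.Icc (rchoose (k : ℝ) k) (rchoose (n : ℝ) k) := by
    constructor
    · rw [rchoose_natCast le_rfl, Nat.choose_self]
      exact_mod_cast hC1
    · rw [rchoose_natCast hkn]
      exact_mod_cast hCle
  obtain ⟨x, hxIcc, hxval⟩ := hIVT hmemI
  simp only at hxval
  have hxk : (k : ℝ) ≤ x := hxIcc.1
  have hxn : x ≤ (n : ℝ) := hxIcc.2
  -- Kruskal-Katona bounds
  have hshad_t : rchoose x t ≤ ((hShadow t C).card : ℝ) :=
    kk_main htk.le C hCuniform x hxk (le_of_eq hxval)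
  have hshad_s : rchoose x s ≤ ((hShadow s C).card : ℝ) :=
    kk_main hsk C hCuniform x hxk (le_of_eq hxval)
  -- convert the good-component inequality
  have hineqR : (n.choose k : ℝ) * rchoose x t ≤ (r : ℝ) * (n.choose t : ℝ) * rchoose x k := by
    have h1 : (n.choose k : ℝ) * ((hShadow t C).card : ℝ)
        ≤ (r : ℝ) * (n.choose t : ℝ) * (C.card : ℝ) := by exact_mod_cast hineq
    calc (n.choose k : ℝ) * rchoose x t
        ≤ (n.choose k : ℝ) * ((hShadow t C).card : ℝ) :=
          mul_le_mul_of_nonneg_left hshad_t (by positivity)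
      _ ≤ (r : ℝ) * (n.choose t : ℝ) * (C.card : ℝ) := h1
      _ = (r : ℝ) * (n.choose t : ℝ) * rchoose x k := by rw [hxval]
  -- turn into the pure product inequality
  have htn : t ≤ n := le_trans htk.le hkn
  have hprod : (∏ j ∈ Finset.Ico t k, ((n : ℝ) - j)) ≤ r * ∏ j ∈ Finset.Ico t k, (x - j) := by
    rw [← rchoose_natCast hkn, ← rchoose_natCast htn] at hineqR
    rw [rchoose, rchoose, rchoose, rchoose] at hineqR
    have hsplitn : (∏ j ∈ Finset.range k, ((n:ℝ) - j))
        = (∏ j ∈ Finset.range t, ((n:ℝ) - j)) * ∏ j ∈ Finset.Ico t k, ((n:ℝ) - j) :=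
      (Finset.prod_range_mul_prod_Ico _ htk.le).symm
    have hsplitx : (∏ j ∈ Finset.range k, (x - j))
        = (∏ j ∈ Finset.range t, (x - j)) * ∏ j ∈ Finset.Ico t k, (x - j) :=
      (Finset.prod_range_mul_prod_Ico _ htk.le).symm
    rw [hsplitn, hsplitx] at hineqR
    have hPnt : (0:ℝ) < ∏ j ∈ Finset.range t, ((n:ℝ) - j) := by
      apply Finset.prod_pos
      intro j hj
      have : (j:ℝ) + 1 ≤ (t:ℝ) := by exact_mod_cast Finset.mem_range.1 hj
      have : (t:ℝ) ≤ (n:ℝ) := by exact_mod_cast htn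
      linarith
    have hPxt : (0:ℝ) < ∏ j ∈ Finset.range t, (x - j) := by
      apply Finset.prod_pos
      intro j hj
      have h1 : (j:ℝ) + 1 ≤ (t:ℝ) := by exact_mod_cast Finset.mem_range.1 hj
      have h2 : (t:ℝ) ≤ (k:ℝ) := by exact_mod_cast htk.le
      linarith
    have hkfac : (0:ℝ) < (k.factorial : ℝ) := by positivity
    have htfac : (0:ℝ) < (t.factorial : ℝ) := by positivity
    have key : (∏ j ∈ Finset.range t, ((n:ℝ) - j)) * (∏ j ∈ Finset.range t, (x - j)) *
        (∏ j ∈ Finset.Ico t k, ((n:ℝ) - j))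
        ≤ (∏ j ∈ Finset.range t, ((n:ℝ) - j)) * (∏ j ∈ Finset.range t, (x - j)) *
          ((r:ℝ) * ∏ j ∈ Finset.Ico t k, (x - j)) := by
      have := mul_le_mul_of_nonneg_left hineqR (le_of_lt (mul_pos hkfac htfac))
      calc (∏ j ∈ Finset.range t, ((n:ℝ) - j)) * (∏ j ∈ Finset.range t, (x - j)) *
            (∏ j ∈ Finset.Ico t k, ((n:ℝ) - j))
          = (k.factorial : ℝ) * (t.factorial : ℝ) *
            ((∏ j ∈ Finset.range t, ((n:ℝ) - j)) * (∏ j ∈ Finset.Ico t k, ((n:ℝ) - j)) /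
              (k.factorial : ℝ) * ((∏ j ∈ Finset.range t, (x - j)) / (t.factorial : ℝ))) := by
            field_simp
        _ ≤ (k.factorial : ℝ) * (t.factorial : ℝ) *
            ((r:ℝ) * ((∏ j ∈ Finset.range t, ((n:ℝ) - j)) / (t.factorial : ℝ)) *
              ((∏ j ∈ Finset.range t, (x - j)) * (∏ j ∈ Finset.Ico t k, (x - j)) /
                (k.factorial : ℝ))) := this
        _ = (∏ j ∈ Finset.range t, ((n:ℝ) - j)) * (∏ j ∈ Finset.range t, (x - j)) *
            ((r:ℝ) * ∏ j ∈ Finset.Ico t k, (x - j)) := by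
            field_simp
    exact le_of_mul_le_mul_left key (mul_pos hPnt hPxt)
  -- apply the product lemma
  have hfinal := lemA htk hsk hkn (by omega) hxk hxn hprod
  -- conclude
  have hsn : s ≤ n := le_trans hsk hkn
  have hMcol : ((hShadow s C).card : ℕ) ≤ Mcol n r k t s c := by
    rw [← hCdef]
    calc (hShadow s (tightComponent t (colorClass n r k c i) e₀)).card
        ≤ (colorClass n r k c i).sup (fun e =>
            (hShadow s (tightComponent t (colorClass n r k c i) e)).card) :=
          Finset.le_sup (f := fun e =>
            (hShadow s (tightComponent t (colorClass n r k c i) e)).card) he₀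
      _ ≤ Mcol n r k t s c := by
          rw [Mcol]
          exact Finset.le_sup (f := fun i : Fin r => (colorClass n r k c i).sup fun e =>
            (hShadow s (tightComponent t (colorClass n r k c i) e)).card) (mem_univ i)
  have hMR : ((hShadow s C).card : ℝ) ≤ (Mcol n r k t s c : ℝ) := by exact_mod_cast hMcol
  have hsfac : (0:ℝ) < (s.factorial : ℝ) := by positivity
  calc (r : ℝ) ^ (-(s : ℝ) / ((k : ℝ) - (t : ℝ))) * (n.choose s : ℝ)
      = (r : ℝ) ^ (-(s : ℝ) / ((k : ℝ) - (t : ℝ))) * rchoose (n:ℝ) s := by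
        rw [rchoose_natCast hsn]
    _ = ((r : ℝ) ^ (-(s : ℝ) / ((k : ℝ) - (t : ℝ))) *
          ∏ j ∈ Finset.range s, ((n:ℝ) - j)) / (s.factorial : ℝ) := by
        rw [rchoose]; ring
    _ ≤ (∏ j ∈ Finset.range s, (x - j)) / (s.factorial : ℝ) := by
        apply div_le_div_of_nonneg_right hfinal hsfac.le
    _ = rchoose x s := by rw [rchoose]
    _ ≤ ((hShadow s C).card : ℝ) := hshad_s
    _ ≤ (Mcol n r k t s c : ℝ) := hMR
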